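/- arXiv:2301.08934 — 2 statements merged into one kernel-verified Lean document; each statement's English description precedes it below -/
import Mathlib

section
/- For every natural number n, the physicists' Hermite polynomial function H_n satisfies the Hermite differential equation: for all real x, H_n''(x) - 2*x*H_n'(x) + 2*n*H_n(x) = 0. -/
open Real

/-- Physicists' Hermite polynomial function via the Rodrigues formula. -/
noncomputable def hermiteFun (n : ℕ) (x : ℝ) : ℝ :=
  (-1 : ℝ) ^ n * Real.exp (x ^ 2) * iteratedDeriv n (fun t : ℝ => Real.exp (-t ^ 2)) x

noncomputable def gfun : ℝ → ℝ := fun t : ℝ => Real.exp (-t ^ 2)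

lemma gfun_contDiff : ContDiff ℝ (⊤ : ℕ∞) gfun :=
  Real.contDiff_exp.comp ((contDiff_id.pow 2).neg)

lemma f_contDiff (n : ℕ) : ContDiff ℝ (⊤ : ℕ∞) (iteratedDeriv n gfun) := by
  induction n with
  | zero => simpa using gfun_contDiff
  | succ n ih =>
    rw [iteratedDeriv_succ]
    exact (contDiff_infty_iff_deriv.mp ih).2

lemma hasDerivAt_f (n : ℕ) (x : ℝ) :
    HasDerivAt (iteratedDeriv n gfun) (iteratedDeriv (n + 1) gfun x) x := by
  have h := (((f_contDiff n).differentiable (by simp)) x).hasDerivAt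
  rwa [← iteratedDeriv_succ] at h

lemma f_rec (n : ℕ) : ∀ x : ℝ, iteratedDeriv (n + 1) gfun x
    = -2 * x * iteratedDeriv n gfun x - 2 * ↑n * iteratedDeriv (n - 1) gfun x := by
  induction n with
  | zero =>
    intro x
    have h : HasDerivAt gfun (Real.exp (-x ^ 2) * -(2 * x ^ 1)) x :=
      ((hasDerivAt_pow 2 x).neg).exp
    rw [iteratedDeriv_one, h.deriv]
    simp [gfun, iteratedDeriv_zero]
    ring
  | succ n ih =>
    intro x
    have hfun : iteratedDeriv (n + 1) gfun
        = fun y => -2 * y * iteratedDeriv n gfun y - 2 * ↑n * iteratedDeriv (n - 1) gfun y :=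
      funext ih
    conv_lhs => rw [iteratedDeriv_succ, hfun]
    have h1 : HasDerivAt (fun y : ℝ => -2 * y * iteratedDeriv n gfun y)
        (-2 * 1 * iteratedDeriv n gfun x + -2 * x * iteratedDeriv (n + 1) gfun x) x :=
      ((hasDerivAt_id x).const_mul (-2 : ℝ)).mul (hasDerivAt_f n x)
    have h2 : HasDerivAt (fun y : ℝ => 2 * (n : ℝ) * iteratedDeriv (n - 1) gfun y)
        (2 * (n : ℝ) * iteratedDeriv (n - 1 + 1) gfun x) x :=
      (hasDerivAt_f (n - 1) x).const_mul _
    rw [HasDerivAt.deriv (f := fun y => -2 * y * iteratedDeriv n gfun y - 2 * (n : ℝ) * iteratedDeriv (n - 1) gfun y) (h1.sub h2)]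
    have hkey : 2 * (n : ℝ) * iteratedDeriv (n - 1 + 1) gfun x
        = 2 * (n : ℝ) * iteratedDeriv n gfun x := by
      cases n with
      | zero => simp
      | succ m => rfl
    have h3 : iteratedDeriv (n + 1 - 1) gfun x = iteratedDeriv n gfun x := by norm_num
    rw [hkey, h3]
    push_cast
    ring

lemma hermiteFun_eq (n : ℕ) :
    hermiteFun n = fun x => (-1 : ℝ) ^ n * Real.exp (x ^ 2) * iteratedDeriv n gfun x := rfl

lemma hasDerivAt_hermiteFun (n : ℕ) (x : ℝ) :
    HasDerivAt (hermiteFun n) (2 * x * hermiteFun n x - hermiteFun (n + 1) x) x := by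
  have hexp : HasDerivAt (fun y : ℝ => (-1 : ℝ) ^ n * Real.exp (y ^ 2))
      ((-1 : ℝ) ^ n * (Real.exp (x ^ 2) * (2 * x ^ 1))) x :=
    ((hasDerivAt_pow 2 x).exp).const_mul _
  have h := hexp.mul (hasDerivAt_f n x)
  have heq : 2 * x * hermiteFun n x - hermiteFun (n + 1) x
      = (-1 : ℝ) ^ n * (Real.exp (x ^ 2) * (2 * x ^ 1)) * iteratedDeriv n gfun x
        + (-1 : ℝ) ^ n * Real.exp (x ^ 2) * iteratedDeriv (n + 1) gfun x := by
    simp only [hermiteFun_eq, pow_succ]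
    ring
  rw [heq, hermiteFun_eq]
  exact h

lemma deriv_hermiteFun (n : ℕ) (x : ℝ) :
    deriv (hermiteFun n) x = 2 * x * hermiteFun n x - hermiteFun (n + 1) x :=
  (hasDerivAt_hermiteFun n x).deriv

lemma hermiteFun_rec (n : ℕ) (x : ℝ) :
    hermiteFun (n + 1) x = 2 * x * hermiteFun n x - 2 * ↑n * hermiteFun (n - 1) x := by
  simp only [hermiteFun_eq]
  rw [f_rec n x]
  have hkey : (2 : ℝ) * n * ((-1 : ℝ) ^ (n - 1) * Real.exp (x ^ 2) * iteratedDeriv (n - 1) gfun x)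
      = -(2 * (n : ℝ)) * ((-1 : ℝ) ^ n * Real.exp (x ^ 2) * iteratedDeriv (n - 1) gfun x) := by
    cases n with
    | zero => simp
    | succ m =>
      have : (m + 1 : ℕ) - 1 = m := rfl
      rw [this, pow_succ]
      ring
  rw [hkey, pow_succ]
  ring

lemma deriv_hermiteFun' (n : ℕ) (x : ℝ) :
    deriv (hermiteFun n) x = 2 * ↑n * hermiteFun (n - 1) x := by
  rw [deriv_hermiteFun, hermiteFun_rec n x]
  ring

/-- The Hermite differential equation: H_n'' - 2 x H_n' + 2 n H_n = 0. -/
theorem hermiteFun_diff_eq (n : ℕ) (x : ℝ) :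
    deriv (deriv (hermiteFun n)) x - 2 * x * deriv (hermiteFun n) x
      + 2 * (n : ℝ) * hermiteFun n x = 0 := by
  cases n with
  | zero =>
    have hd : deriv (hermiteFun 0) = fun _ : ℝ => (0 : ℝ) := by
      funext y
      rw [deriv_hermiteFun' 0 y]
      simp
    rw [hd]
    simp
  | succ m =>
    have hd : deriv (hermiteFun (m + 1)) = fun y => 2 * ((m : ℝ) + 1) * hermiteFun m y := by
      funext y
      rw [deriv_hermiteFun' (m + 1) y]
      have : (m + 1 : ℕ) - 1 = m := rfl
      rw [this]
      push_cast
      ring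
    rw [hd]
    have h : HasDerivAt (fun y => 2 * ((m : ℝ) + 1) * hermiteFun m y)
        (2 * ((m : ℝ) + 1) * (2 * x * hermiteFun m x - hermiteFun (m + 1) x)) x :=
      (hasDerivAt_hermiteFun m x).const_mul _
    rw [h.deriv]
    push_cast
    ring
end

section
/- Let μ > 0 be a real parameter and n a natural number. Define u_n(x) = (π^(-1/4) / sqrt(2^n * n!)) * exp(-μ*x^2/2) * H_n(sqrt(μ)*x). Then u_n is an eigenfunction of the one-dimensional quantum harmonic oscillator with eigenvalue λ_n(μ) = (n + 1/2)*μ: for all real x, -(1/2)*u_n''(x) + (1/2)*μ^2*x^2*u_n(x) = (n + 1/2)*μ*u_n(x). -/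
open Real

/-- The n-th eigenfunction of the 1D quantum harmonic oscillator with parameter μ. -/
noncomputable def oscEigenfun (n : ℕ) (μ : ℝ) (x : ℝ) : ℝ :=
  (Real.pi ^ (-(1 : ℝ) / 4) / Real.sqrt (2 ^ n * (n.factorial : ℝ))) *
    Real.exp (-μ * x ^ 2 / 2) * hermiteFun n (Real.sqrt μ * x)

open Polynomial in
lemma hermiteFun_eq_aeval (n : ℕ) (x : ℝ) :
    hermiteFun n x = (Real.sqrt 2) ^ n * aeval (Real.sqrt 2 * x) (hermite n) := by
  have hg : ContDiff ℝ n (fun y : ℝ => Real.exp (-(y ^ 2 / 2))) := by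
    apply Real.contDiff_exp.comp
    exact (((contDiff_id.pow 2).div_const 2).neg).of_le le_top
  have hcomp : (fun t : ℝ => Real.exp (-t ^ 2)) =
      fun t : ℝ => Real.exp (-((Real.sqrt 2 * t) ^ 2 / 2)) := by
    funext t
    congr 1
    rw [mul_pow, Real.sq_sqrt (by norm_num : (0:ℝ) ≤ 2)]
    ring
  have h1 : iteratedDeriv n (fun t : ℝ => Real.exp (-t ^ 2)) x =
      (Real.sqrt 2) ^ n * iteratedDeriv n (fun y : ℝ => Real.exp (-(y ^ 2 / 2)))
        (Real.sqrt 2 * x) := by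
    rw [hcomp]
    rw [iteratedDeriv_comp_const_mul hg (Real.sqrt 2)]
  rw [hermiteFun, h1, iteratedDeriv_eq_iterate,
    Polynomial.deriv_gaussian_eq_hermite_mul_gaussian]
  have h2 : (Real.sqrt 2 * x) ^ 2 / 2 = x ^ 2 := by
    rw [mul_pow, Real.sq_sqrt (by norm_num : (0:ℝ) ≤ 2)]; ring
  rw [h2]
  rw [show ((-1:ℝ)^n * Real.exp (x^2) * (Real.sqrt 2 ^ n *
      ((-1:ℝ)^n * aeval (Real.sqrt 2 * x) (hermite n) * Real.exp (-(x^2))))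
      = ((-1:ℝ)^n)^2 * (Real.exp (x^2) * Real.exp (-(x^2))) *
        (Real.sqrt 2 ^ n * aeval (Real.sqrt 2 * x) (hermite n)) ) by ring]
  rw [← Real.exp_add, ← pow_mul]
  have h3 : ((-1:ℝ) ^ n) ^ 2 = 1 := by
    rw [← pow_mul, mul_comm, pow_mul]
    norm_num
  rw [← pow_mul] at h3
  rw [h3]
  simp

open Polynomial in
lemma derivative_hermite_succ (n : ℕ) :
    derivative (hermite (n + 1)) = ((n : Polynomial ℤ) + 1) * hermite n := by
  induction n with
  | zero => simp [hermite_succ, hermite_zero]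
  | succ k ih =>
    rw [hermite_succ (k+1), derivative_sub, derivative_mul, derivative_X, one_mul, ih,
      derivative_mul, hermite_succ k]
    rw [show derivative ((k : Polynomial ℤ) + 1) = 0 by simp]
    push_cast
    ring

open Polynomial in
lemma hermite_ode (n : ℕ) :
    X * derivative (hermite n) - derivative (derivative (hermite n))
      = (n : Polynomial ℤ) * hermite n := by
  cases n with
  | zero => simp [hermite_zero]
  | succ k =>
    rw [derivative_hermite_succ, derivative_mul,
      show derivative ((k : Polynomial ℤ) + 1) = 0 by simp, zero_mul, zero_add,
      hermite_succ]
    push_cast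
    ring

/-- u_n is an eigenfunction of the 1D harmonic oscillator with eigenvalue (n + 1/2) μ. -/
theorem oscEigenfun_eigen (μ : ℝ) (hμ : 0 < μ) (n : ℕ) (x : ℝ) :
    -(1 / 2) * deriv (deriv (oscEigenfun n μ)) x
      + (1 / 2) * μ ^ 2 * x ^ 2 * oscEigenfun n μ x
      = ((n : ℝ) + 1 / 2) * μ * oscEigenfun n μ x := by
  classical
  set K : ℝ := Real.pi ^ (-(1 : ℝ) / 4) / Real.sqrt (2 ^ n * (n.factorial : ℝ)) with hK
  set A : ℝ := K * (Real.sqrt 2) ^ n with hA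
  set c : ℝ := Real.sqrt 2 * Real.sqrt μ with hc
  have hc2 : c ^ 2 = 2 * μ := by
    rw [hc, mul_pow, Real.sq_sqrt (by norm_num : (0:ℝ) ≤ 2), Real.sq_sqrt hμ.le]
  set P : ℝ → ℝ := fun y => Polynomial.aeval y (Polynomial.hermite n) with hP
  set P₁ : ℝ → ℝ := fun y =>
    Polynomial.aeval y (Polynomial.derivative (Polynomial.hermite n)) with hP₁
  set P₂ : ℝ → ℝ := fun y =>
    Polynomial.aeval y (Polynomial.derivative (Polynomial.derivative (Polynomial.hermite n)))
    with hP₂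
  have hu : oscEigenfun n μ = fun x => A * Real.exp (-μ * x ^ 2 / 2) * P (c * x) := by
    funext y
    rw [oscEigenfun, hermiteFun_eq_aeval]
    simp only [hA, hP, hc, hK]
    ring_nf
  -- exp part derivative
  have hexp : ∀ y : ℝ, HasDerivAt (fun t : ℝ => Real.exp (-μ * t ^ 2 / 2))
      (-μ * y * Real.exp (-μ * y ^ 2 / 2)) y := by
    intro y
    have h1 : HasDerivAt (fun t : ℝ => -μ * t ^ 2 / 2) (-μ * y) y := by
      have := ((hasDerivAt_pow 2 y).const_mul (-μ)).div_const 2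
      refine this.congr_deriv ?_
      push_cast; ring
    simpa [mul_comm] using h1.exp
  have hPc : ∀ y : ℝ, HasDerivAt (fun t : ℝ => P (c * t)) (c * P₁ (c * y)) y := by
    intro y
    have h1 := (Polynomial.hermite n : Polynomial ℤ).hasDerivAt_aeval (R := ℤ) (c * y)
    have h2 : HasDerivAt (fun t : ℝ => c * t) c y := by
      simpa using (hasDerivAt_id y).const_mul c
    simpa [hP, hP₁, Function.comp_def, mul_comm] using (HasDerivAt.comp y h1 h2)
  have hP₁c : ∀ y : ℝ, HasDerivAt (fun t : ℝ => P₁ (c * t)) (c * P₂ (c * y)) y := by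
    intro y
    have h1 := (Polynomial.derivative (Polynomial.hermite n)).hasDerivAt_aeval (R := ℤ) (c * y)
    have h2 : HasDerivAt (fun t : ℝ => c * t) c y := by
      simpa using (hasDerivAt_id y).const_mul c
    simpa [hP₁, hP₂, Function.comp_def, mul_comm] using (HasDerivAt.comp y h1 h2)
  set v : ℝ → ℝ := fun y =>
    A * Real.exp (-μ * y ^ 2 / 2) * (-μ * y * P (c * y) + c * P₁ (c * y)) with hv
  have huv : ∀ y : ℝ, HasDerivAt (oscEigenfun n μ) (v y) y := by
    intro y
    rw [hu]
    have h := (((hexp y).const_mul A).mul (hPc y))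
    refine h.congr_deriv ?_
    rw [hv]; ring
  set w : ℝ → ℝ := fun y =>
    A * Real.exp (-μ * y ^ 2 / 2) *
      (μ ^ 2 * y ^ 2 * P (c * y) - μ * P (c * y) - 2 * μ * y * c * P₁ (c * y)
        + c ^ 2 * P₂ (c * y)) with hw
  have hvw : ∀ y : ℝ, HasDerivAt v (w y) y := by
    intro y
    have hin : HasDerivAt (fun t : ℝ => -μ * t * P (c * t) + c * P₁ (c * t))
        (-μ * P (c * y) + -μ * y * (c * P₁ (c * y)) + c * (c * P₂ (c * y))) y := by
      have hb : HasDerivAt (fun t : ℝ => -μ * t) (-μ) y := by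
        simpa using (hasDerivAt_id y).const_mul (-μ)
      exact (hb.mul (hPc y)).add ((hP₁c y).const_mul c)
    have h := (((hexp y).const_mul A).mul hin)
    refine h.congr_deriv ?_
    rw [hw]; ring
  have hderiv1 : deriv (oscEigenfun n μ) = v := funext fun y => (huv y).deriv
  have hderiv2 : deriv (deriv (oscEigenfun n μ)) x = w x := by
    rw [hderiv1]; exact (hvw x).deriv
  rw [hderiv2, hu]
  -- the Hermite ODE evaluated at c * x
  have hode : (c * x) * P₁ (c * x) - P₂ (c * x) = (n : ℝ) * P (c * x) := by
    have := congrArg (fun p => Polynomial.aeval (c * x) p) (hermite_ode n)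
    simpa [hP, hP₁, hP₂, Polynomial.aeval_def] using this
  rw [hw]
  beta_reduce
  linear_combination (μ * A * Real.exp (-μ * x ^ 2 / 2)) * hode
    + (-(1/2) * A * Real.exp (-μ * x ^ 2 / 2) * P₂ (c * x)) * hc2
end
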